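/- arXiv:1308.2263 — 3 statements merged into one kernel-verified Lean document; each statement's English description precedes it below -/
import Mathlib

section
/- For orthonormal vectors u, v, w in ℝ^7, the value of the 3-form φ₀ = e^{123}+e^{145}+e^{167}+e^{246}−e^{257}−e^{347}−e^{356} on (u,v,w) satisfies |φ₀(u,v,w)| ≤ 1. -/
noncomputable section

open RealInnerProductSpace

/-- The elementary 3-form `e^{ijk} = dx^i ∧ dx^j ∧ dx^k` on `ℝ⁷`, evaluated on
`(u, v, w)` as a determinant. -/
def eform (i j k : Fin 7) (u v w : EuclideanSpace ℝ (Fin 7)) : ℝ :=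
  Matrix.det !![u i, u j, u k; v i, v j, v k; w i, w j, w k]

/-- The standard associative 3-form
`φ₀ = e^{123} + e^{145} + e^{167} + e^{246} − e^{257} − e^{347} − e^{356}`
(indices shifted to start at 0). -/
def phi0 (u v w : EuclideanSpace ℝ (Fin 7)) : ℝ :=
  eform 0 1 2 u v w + eform 0 3 4 u v w + eform 0 5 6 u v w + eform 1 3 5 u v w
    - eform 1 4 6 u v w - eform 2 3 6 u v w - eform 2 4 5 u v w

/-- The G₂ cross product on `ℝ⁷`. -/
def gcross (u v : EuclideanSpace ℝ (Fin 7)) : EuclideanSpace ℝ (Fin 7) :=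
  (WithLp.equiv 2 (Fin 7 → ℝ)).symm
    ![ (u 1 * v 2 - u 2 * v 1) + (u 3 * v 4 - u 4 * v 3) + (u 5 * v 6 - u 6 * v 5),
       -(u 0 * v 2 - u 2 * v 0) + (u 3 * v 5 - u 5 * v 3) - (u 4 * v 6 - u 6 * v 4),
       (u 0 * v 1 - u 1 * v 0) - (u 3 * v 6 - u 6 * v 3) - (u 4 * v 5 - u 5 * v 4),
       -(u 0 * v 4 - u 4 * v 0) - (u 1 * v 5 - u 5 * v 1) + (u 2 * v 6 - u 6 * v 2),
       (u 0 * v 3 - u 3 * v 0) + (u 1 * v 6 - u 6 * v 1) + (u 2 * v 5 - u 5 * v 2),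
       -(u 0 * v 6 - u 6 * v 0) + (u 1 * v 3 - u 3 * v 1) - (u 2 * v 4 - u 4 * v 2),
       (u 0 * v 5 - u 5 * v 0) - (u 1 * v 4 - u 4 * v 1) - (u 2 * v 3 - u 3 * v 2) ]

lemma vec7_five {α : Type*} (a b c d e f g : α) : ![a,b,c,d,e,f,g] 5 = f := rfl

lemma vec7_six {α : Type*} (a b c d e f g : α) : ![a,b,c,d,e,f,g] 6 = g := rfl

lemma phi0_eq_inner (u v w : EuclideanSpace ℝ (Fin 7)) :
    phi0 u v w = ⟪gcross u v, w⟫ := by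
  simp [phi0, eform, gcross, PiLp.inner_apply, Fin.sum_univ_seven,
    Matrix.det_fin_three, vec7_five, vec7_six]
  ring

lemma gcross_inner_self (u v : EuclideanSpace ℝ (Fin 7)) :
    ⟪gcross u v, gcross u v⟫ = ⟪u, u⟫ * ⟪v, v⟫ - ⟪u, v⟫ ^ 2 := by
  simp only [gcross, WithLp.equiv_symm_apply, PiLp.toLp_apply, PiLp.inner_apply,
    RCLike.inner_apply, conj_trivial, Fin.sum_univ_seven,
    Matrix.cons_val_zero, Matrix.cons_val_one, Matrix.head_cons,
    Matrix.cons_val_two, Matrix.tail_cons, Matrix.cons_val_three,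
    Matrix.cons_val_four, vec7_five, vec7_six]
  ring

/-- For orthonormal vectors `u, v, w ∈ ℝ⁷`, `|φ₀(u,v,w)| ≤ 1`. -/
theorem abs_phi0_le_one (u v w : EuclideanSpace ℝ (Fin 7))
    (huu : ⟪u, u⟫ = 1) (hvv : ⟪v, v⟫ = 1) (hww : ⟪w, w⟫ = 1)
    (huv : ⟪u, v⟫ = 0) (huw : ⟪u, w⟫ = 0) (hvw : ⟪v, w⟫ = 0) :
    |phi0 u v w| ≤ 1 := by
  have hx : ⟪gcross u v, gcross u v⟫ = 1 := by
    rw [gcross_inner_self, huu, hvv, huv]; ring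
  have hnx : ‖gcross u v‖ = 1 := by
    have := real_inner_self_eq_norm_sq (gcross u v)
    nlinarith [norm_nonneg (gcross u v)]
  have hnw : ‖w‖ = 1 := by
    have := real_inner_self_eq_norm_sq w
    nlinarith [norm_nonneg w]
  calc |phi0 u v w| = |⟪gcross u v, w⟫| := by rw [phi0_eq_inner]
    _ ≤ ‖gcross u v‖ * ‖w‖ := abs_real_inner_le_norm _ _
    _ = 1 := by rw [hnx, hnw, one_mul]
end
end

section
/- For orthonormal u, v, w in the imaginary octonions, with χ(u,v,w) = −u × (v × w) − ⟨u,v⟩w + ⟨u,w⟩v and φ₀(u,v,w) = ⟨u × v, w⟩, the identity φ₀(u,v,w)² + |χ(u,v,w)|² = 1 holds. -/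
noncomputable section

/-- Octonions via the Cayley–Dickson construction on the quaternions. -/
abbrev Oct : Type := Quaternion ℝ × Quaternion ℝ

namespace Oct

/-- Cayley–Dickson multiplication. -/
def mul (x y : Oct) : Oct :=
  (x.1 * y.1 - star y.2 * x.2, y.2 * x.1 + x.2 * star y.1)

/-- Octonion conjugation. -/
def conj (x : Oct) : Oct := (star x.1, -x.2)

/-- Real part. -/
def re (x : Oct) : ℝ := x.1.re

/-- Imaginary part. -/
def im (x : Oct) : Oct := (x.1 - ((x.1.re : ℝ) : Quaternion ℝ), x.2)

/-- The standard inner product `⟨x, y⟩ = Re (x * conj y)`. -/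
def inner (x y : Oct) : ℝ := (mul x (conj y)).1.re

/-- The cross product `u × v = Im (conj v * u)` on imaginary octonions. -/
def cross (u v : Oct) : Oct := im (mul (conj v) u)

/-- `x` is an imaginary octonion. -/
def IsIm (x : Oct) : Prop := re x = 0

end Oct

/-- The associative 3-form `φ₀(u,v,w) = ⟨u × v, w⟩`. -/
def phi (u v w : Oct) : ℝ := Oct.inner (Oct.cross u v) w

/-- `χ(u,v,w) = −u × (v × w) − ⟨u,v⟩ w + ⟨u,w⟩ v`. -/
def chi (u v w : Oct) : Oct :=
  -Oct.cross u (Oct.cross v w) - Oct.inner u v • w + Oct.inner u w • v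

namespace Oct

lemma inner_symm' (x y : Oct) : inner x y = inner y x := by
  obtain ⟨a, b⟩ := x
  obtain ⟨c, d⟩ := y
  simp [inner, mul, conj, Quaternion.ext_iff, QuaternionAlgebra.mk_mul_mk,
    Quaternion.re_mul, Quaternion.imI_mul, Quaternion.imJ_mul, Quaternion.imK_mul,
    Quaternion.re_neg, Quaternion.imI_neg, Quaternion.imJ_neg, Quaternion.imK_neg,
    Quaternion.re_star, Quaternion.imI_star, Quaternion.imJ_star, Quaternion.imK_star]
  ring

set_option maxHeartbeats 4000000 in
lemma cross_normsq' (x y : Oct) :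
    inner (cross x y) (cross x y) = inner x x * inner y y - inner x y ^ 2 := by
  obtain ⟨a, b⟩ := x
  obtain ⟨c, d⟩ := y
  simp [inner, cross, im, mul, conj, Quaternion.ext_iff, QuaternionAlgebra.mk_mul_mk,
    Quaternion.re_mul, Quaternion.imI_mul, Quaternion.imJ_mul, Quaternion.imK_mul,
    Quaternion.re_neg, Quaternion.imI_neg, Quaternion.imJ_neg, Quaternion.imK_neg,
    Quaternion.re_star, Quaternion.imI_star, Quaternion.imJ_star, Quaternion.imK_star]
  ring

set_option maxHeartbeats 1000000 in
lemma phi_cyc' (u v w : Oct) (hu : re u = 0) (hv : re v = 0) (hw : re w = 0) :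
    inner (cross u v) w = inner (cross v w) u := by
  obtain ⟨a, b⟩ := u
  obtain ⟨c, d⟩ := v
  obtain ⟨e, f⟩ := w
  simp only [re] at hu hv hw
  simp [inner, cross, im, mul, conj, Quaternion.ext_iff, hu, hv, hw, QuaternionAlgebra.mk_mul_mk,
    Quaternion.re_mul, Quaternion.imI_mul, Quaternion.imJ_mul, Quaternion.imK_mul,
    Quaternion.re_neg, Quaternion.imI_neg, Quaternion.imJ_neg, Quaternion.imK_neg,
    Quaternion.re_star, Quaternion.imI_star, Quaternion.imJ_star, Quaternion.imK_star]
  ring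

lemma inner_neg_neg' (x : Oct) : inner (-x) (-x) = inner x x := by
  obtain ⟨a, b⟩ := x
  simp [inner, mul, conj, Quaternion.ext_iff, QuaternionAlgebra.mk_mul_mk,
    Quaternion.re_mul, Quaternion.imI_mul, Quaternion.imJ_mul, Quaternion.imK_mul,
    Quaternion.re_neg, Quaternion.imI_neg, Quaternion.imJ_neg, Quaternion.imK_neg,
    Quaternion.re_star, Quaternion.imI_star, Quaternion.imJ_star, Quaternion.imK_star]

end Oct

/-- For orthonormal imaginary octonions `u, v, w`,
`φ₀(u,v,w)² + |χ(u,v,w)|² = 1`. -/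
theorem phi_sq_add_chi_normsq (u v w : Oct)
    (hu : Oct.IsIm u) (hv : Oct.IsIm v) (hw : Oct.IsIm w)
    (huu : Oct.inner u u = 1) (hvv : Oct.inner v v = 1) (hww : Oct.inner w w = 1)
    (huv : Oct.inner u v = 0) (huw : Oct.inner u w = 0) (hvw : Oct.inner v w = 0) :
    phi u v w ^ 2 + Oct.inner (chi u v w) (chi u v w) = 1 := by
  have hchi : chi u v w = -Oct.cross u (Oct.cross v w) := by
    simp [chi, huv, huw]
  have hzz : Oct.inner (Oct.cross v w) (Oct.cross v w) = 1 := by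
    rw [Oct.cross_normsq', hvv, hww, hvw]; ring
  have hphi : Oct.inner u (Oct.cross v w) = phi u v w := by
    rw [Oct.inner_symm', ← Oct.phi_cyc' u v w hu hv hw]; rfl
  rw [hchi, Oct.inner_neg_neg', Oct.cross_normsq', hzz, huu, hphi]
  ring
end
end

section
/- In the ring R = ℤ[x,y]/(x⁴, x³ − y³, x² − y², xy − yx) with x, y in degree 4, the degree-12 component is generated by x³ and the degree-8 component is free of rank 2, generated by x² and xy. -/
open MvPolynomial

noncomputable section

/-- The generator `x` of degree 4. -/
def x : MvPolynomial (Fin 2) ℤ := X 0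

/-- The generator `y` of degree 4. -/
def y : MvPolynomial (Fin 2) ℤ := X 1

/-- The defining ideal `(x⁴, x³ − y³, x² − y²)` (the relation `xy − yx = 0`
being automatic in a commutative ring). -/
def I : Ideal (MvPolynomial (Fin 2) ℤ) :=
  Ideal.span {x ^ 4, x ^ 3 - y ^ 3, x ^ 2 - y ^ 2}

/-- The weights: `|x| = |y| = 4`. -/
def w : Fin 2 → ℕ := ![4, 4]

namespace FreeRingAux

abbrev Q : MvPolynomial (Fin 2) ℤ →+* MvPolynomial (Fin 2) ℤ ⧸ I := Ideal.Quotient.mk I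

lemma h2 : Q (x ^ 2) = Q (y ^ 2) :=
  Ideal.Quotient.eq.mpr (Ideal.subset_span (by simp))

lemma h3 : Q (x ^ 3) = Q (y ^ 3) :=
  Ideal.Quotient.eq.mpr (Ideal.subset_span (by simp))

lemma hsmul (c : ℤ) (p : MvPolynomial (Fin 2) ℤ) : Q (C c * p) = c • Q p := by
  rw [map_mul, zsmul_eq_mul]
  congr 1

lemma monomial_eq' (d : Fin 2 →₀ ℕ) (c : ℤ) :
    (monomial d c : MvPolynomial (Fin 2) ℤ) = C c * (x ^ d 0 * y ^ d 1) := by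
  rw [monomial_eq, Finsupp.prod_pow, Fin.prod_univ_two]
  rfl

lemma deg_of_mem {p : MvPolynomial (Fin 2) ℤ} {m : ℕ} (hp : p.IsWeightedHomogeneous w m)
    {d : Fin 2 →₀ ℕ} (hd : d ∈ p.support) : 4 * (d 0 + d 1) = m := by
  have h := hp (MvPolynomial.mem_support_iff.mp hd)
  rw [Finsupp.weight_apply, Finsupp.sum_fintype] at h
  · simp [Fin.sum_univ_two, w] at h; omega
  · simp

lemma deg3 (i j : ℕ) (h : i + j = 3) : Q (x ^ i * y ^ j) = Q (x ^ 3) := by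
  have hi : i ≤ 3 := by omega
  interval_cases i
  · have : j = 3 := by omega
    subst this; simpa using h3.symm
  · have : j = 2 := by omega
    subst this
    rw [map_mul, ← h2, ← map_mul, pow_one, ← pow_succ']
  · have : j = 1 := by omega
    subst this
    rw [map_mul, h2, ← map_mul, pow_one, ← pow_succ, ← h3]
  · have : j = 0 := by omega
    subst this; simp

lemma deg2 (i j : ℕ) (h : i + j = 2) :
    Q (x ^ i * y ^ j) = Q (x ^ 2) ∨ Q (x ^ i * y ^ j) = Q (x * y) := by
  have hi : i ≤ 2 := by omega
  interval_cases i
  · have : j = 2 := by omega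
    subst this; left; simpa using h2.symm
  · have : j = 1 := by omega
    subst this; right; rw [pow_one, pow_one]
  · have : j = 0 := by omega
    subst this; left; simp

def t : Polynomial ℤ ⧸ Ideal.span {(Polynomial.X : Polynomial ℤ) ^ 3} :=
  Ideal.Quotient.mk _ Polynomial.X

lemma t3 : t ^ 3 = 0 := by
  rw [t, ← map_pow, Ideal.Quotient.eq_zero_iff_mem]
  exact Ideal.subset_span rfl

lemma key (n : ℤ)
    (h : Ideal.Quotient.mk (Ideal.span {(Polynomial.X : Polynomial ℤ) ^ 3})
      (Polynomial.C n * Polynomial.X ^ 2) = 0) : n = 0 := by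
  rw [Ideal.Quotient.eq_zero_iff_mem, Ideal.mem_span_singleton] at h
  by_contra hn
  have h0 : (Polynomial.C n * Polynomial.X ^ 2 : Polynomial ℤ) ≠ 0 :=
    mul_ne_zero (by simpa using hn) (pow_ne_zero _ Polynomial.X_ne_zero)
  have := Polynomial.natDegree_le_of_dvd h h0
  rw [Polynomial.natDegree_X_pow, Polynomial.natDegree_C_mul_X_pow _ _ hn] at this
  omega

def φ (ε : ℤ) : MvPolynomial (Fin 2) ℤ →+*
    Polynomial ℤ ⧸ Ideal.span {(Polynomial.X : Polynomial ℤ) ^ 3} :=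
  (aeval ![t, ε • t]).toRingHom

lemma φ_ker (ε : ℤ) (hε : ε ^ 2 = 1) : I ≤ RingHom.ker (φ ε) := by
  rw [I, Ideal.span_le]
  rintro g (rfl | rfl | rfl) <;>
    simp only [SetLike.mem_coe, RingHom.mem_ker, φ, AlgHom.toRingHom_eq_coe,
      RingHom.coe_coe, map_sub, map_pow, aeval_X, x, y,
      Matrix.cons_val_zero, Matrix.cons_val_one, Matrix.head_cons]
  · rw [show (t : Polynomial ℤ ⧸ Ideal.span {(Polynomial.X : Polynomial ℤ) ^ 3}) ^ 4 = t ^ 3 * t by ring, t3, zero_mul]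
  · rw [smul_pow, t3]
    simp
  · rw [smul_pow, hε, one_smul, sub_self]

end FreeRingAux

open FreeRingAux

/-- In `R = ℤ[x,y]/(x⁴, x³ − y³, x² − y², xy − yx)` with `|x| = |y| = 4`:
the degree-12 component is generated by `x³`, and the degree-8 component is
free of rank 2, generated by `x²` and `xy`. -/
theorem free_ring_degrees :
    (∀ p : MvPolynomial (Fin 2) ℤ, p.IsWeightedHomogeneous w 12 →
      ∃ n : ℤ, Ideal.Quotient.mk I p = n • Ideal.Quotient.mk I (x ^ 3)) ∧
    (∀ p : MvPolynomial (Fin 2) ℤ, p.IsWeightedHomogeneous w 8 →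
      ∃ a b : ℤ, Ideal.Quotient.mk I p =
        a • Ideal.Quotient.mk I (x ^ 2) + b • Ideal.Quotient.mk I (x * y)) ∧
    (∀ a b : ℤ, a • Ideal.Quotient.mk I (x ^ 2) + b • Ideal.Quotient.mk I (x * y) = 0 →
      a = 0 ∧ b = 0) := by
  refine ⟨?_, ?_, ?_⟩
  · intro p hp
    have hrep : Ideal.Quotient.mk I p = ∑ d ∈ p.support, Q (monomial d (coeff d p)) := by
      conv_lhs => rw [← p.support_sum_monomial_coeff]
      rw [map_sum]
    rw [hrep]
    refine Finset.sum_induction _ (fun q => ∃ n : ℤ, q = n • Q (x ^ 3)) ?_ ⟨0, by simp⟩ ?_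
    · rintro a b ⟨n, rfl⟩ ⟨m, rfl⟩; exact ⟨n + m, (add_smul n m _).symm⟩
    · intro d hd
      have hdeg : d 0 + d 1 = 3 := by have := deg_of_mem hp hd; omega
      refine ⟨coeff d p, ?_⟩
      rw [monomial_eq', hsmul, deg3 _ _ hdeg]
  · intro p hp
    have hrep : Ideal.Quotient.mk I p = ∑ d ∈ p.support, Q (monomial d (coeff d p)) := by
      conv_lhs => rw [← p.support_sum_monomial_coeff]
      rw [map_sum]
    rw [hrep]
    refine Finset.sum_induction _
      (fun q => ∃ a b : ℤ, q = a • Q (x ^ 2) + b • Q (x * y)) ?_ ⟨0, 0, by simp⟩ ?_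
    · rintro q r ⟨a, b, rfl⟩ ⟨a', b', rfl⟩
      exact ⟨a + a', b + b', by rw [add_smul, add_smul]; ring⟩
    · intro d hd
      have hdeg : d 0 + d 1 = 2 := by have := deg_of_mem hp hd; omega
      rcases deg2 _ _ hdeg with h | h
      · exact ⟨coeff d p, 0, by rw [monomial_eq', hsmul, h]; simp⟩
      · exact ⟨0, coeff d p, by rw [monomial_eq', hsmul, h]; simp⟩
  · intro a b hab
    have hmem : C a * x ^ 2 + C b * (x * y) ∈ I := by
      rw [← Ideal.Quotient.eq_zero_iff_mem, map_add, hsmul, hsmul, hab]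
    have e1 : φ 1 (C a * x ^ 2 + C b * (x * y)) = 0 := φ_ker 1 (by norm_num) hmem
    have e2 : φ (-1) (C a * x ^ 2 + C b * (x * y)) = 0 := φ_ker (-1) (by norm_num) hmem
    simp only [φ, AlgHom.toRingHom_eq_coe, RingHom.coe_coe, map_add, map_mul, map_pow,
      aeval_X, aeval_C, x, y, Matrix.cons_val_zero, Matrix.cons_val_one, Matrix.head_cons,
      algebraMap_int_eq, eq_intCast, map_intCast, one_smul, neg_smul] at e1 e2
    have key1 : a + b = 0 := by
      apply key
      rw [show (Polynomial.C (a + b) : Polynomial ℤ) = ((a + b : ℤ) : Polynomial ℤ) by simp,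
        map_mul, map_intCast, map_pow]
      show ((a + b : ℤ) : Polynomial ℤ ⧸ Ideal.span {(Polynomial.X : Polynomial ℤ) ^ 3}) * t ^ 2 = 0
      push_cast
      linear_combination e1
    have key2 : a - b = 0 := by
      apply key
      rw [show (Polynomial.C (a - b) : Polynomial ℤ) = ((a - b : ℤ) : Polynomial ℤ) by simp,
        map_mul, map_intCast, map_pow]
      show ((a - b : ℤ) : Polynomial ℤ ⧸ Ideal.span {(Polynomial.X : Polynomial ℤ) ^ 3}) * t ^ 2 = 0
      push_cast
      linear_combination e2
    omega
end
end
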